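/- Define g : (9,∞) → ℝ by g(x) = 2/(3x) − 1/(12(x−1)) + 5/(12(x+1)) − ln(1 + 1/x) − (1/(12(x+1)³) + 13/(120(x+1)⁴)) + (1/(12x³) + 13/(120x⁴)). Then g(x) > 0 for every x ∈ (9,∞). -/

import Mathlib

noncomputable def g (x : ℝ) : ℝ :=
  2 / (3 * x) - 1 / (12 * (x - 1)) + 5 / (12 * (x + 1)) - Real.log (1 + 1 / x)
    - (1 / (12 * (x + 1) ^ 3) + 13 / (120 * (x + 1) ^ 4))
    + (1 / (12 * x ^ 3) + 13 / (120 * x ^ 4))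

theorem g_pos : ∀ x ∈ Set.Ioi (9 : ℝ), 0 < g x := by
  intro x hx
  simp only [Set.mem_Ioi] at hx
  have hx0 : (0:ℝ) < x := by linarith
  have hx1 : (0:ℝ) < x - 1 := by linarith
  have hxp : (0:ℝ) < x + 1 := by linarith
  have habs : |(-(1/x))| = 1/x := by
    rw [abs_neg, abs_of_pos (by positivity)]
  have ht : |(-(1/x))| < 1 := by
    rw [habs, div_lt_one hx0]; linarith
  have hlog := Real.abs_log_sub_add_sum_range_le ht 6
  have hub : Real.log (1 + 1/x)
      ≤ 1/x - 1/(2*x^2) + 1/(3*x^3) - 1/(4*x^4) + 1/(5*x^5) - 1/(6*x^6)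
        + 1/(x^6*(x-1)) := by
    have h2 := (abs_le.mp hlog).2
    have hsum : (∑ i ∈ Finset.range 6, (-(1/x))^(i+1)/(i+1))
        = -(1/x) + 1/(2*x^2) - 1/(3*x^3) + 1/(4*x^4) - 1/(5*x^5) + 1/(6*x^6) := by
      simp [Finset.sum_range_succ]
      field_simp
      ring
    have hR : |(-(1/x))|^(6+1)/(1 - |(-(1/x))|) = 1/(x^6*(x-1)) := by
      rw [habs]
      have h1x : (0:ℝ) < 1 - 1/x := by
        rw [sub_pos, div_lt_one hx0]; linarith
      rw [div_eq_div_iff h1x.ne' (by positivity)]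
      field_simp
      ring
      rw [← mul_pow, mul_inv_cancel₀ hx0.ne', one_pow]
    rw [hsum, hR, show (1:ℝ) - -(1/x) = 1 + 1/x by ring] at h2
    linarith
  have hy : (0:ℝ) < x - 9 := by linarith
  have hN : (0:ℝ) < 56*x^7 - 322*x^6 - 1148*x^5 - 3437*x^4 - 5117*x^3
      - 3612*x^2 - 980*x := by
    have e : 56*x^7 - 322*x^6 - 1148*x^5 - 3437*x^4 - 5117*x^3 - 3612*x^2 - 980*x
        = 56*(x-9)^7 + 3206*(x-9)^6 + 76720*(x-9)^5 + 982513*(x-9)^4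
          + 7106071*(x-9)^3 + 27570921*(x-9)^2 + 45250345*(x-9) + 2352168 := by
      ring
    rw [e]
    have h7 := pow_pos hy 7
    have h6 := pow_pos hy 6
    have h5 := pow_pos hy 5
    have h4 := pow_pos hy 4
    have h3 := pow_pos hy 3
    have h2 := pow_pos hy 2
    linarith
  have hD : (0:ℝ) < 840*x^7*((x-1)*(x+1)^4) := by positivity
  have hrat : (2 / (3 * x) - 1 / (12 * (x - 1)) + 5 / (12 * (x + 1))
      - (1 / (12 * (x + 1) ^ 3) + 13 / (120 * (x + 1) ^ 4))
      + (1 / (12 * x ^ 3) + 13 / (120 * x ^ 4)))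
      - (1/x - 1/(2*x^2) + 1/(3*x^3) - 1/(4*x^4) + 1/(5*x^5) - 1/(6*x^6)
        + 1/(x^6*(x-1)))
      = (56*x^7 - 322*x^6 - 1148*x^5 - 3437*x^4 - 5117*x^3 - 3612*x^2 - 980*x)
        / (840*x^7*((x-1)*(x+1)^4)) := by
    field_simp
    ring
  have hpos : (0:ℝ) < (2 / (3 * x) - 1 / (12 * (x - 1)) + 5 / (12 * (x + 1))
      - (1 / (12 * (x + 1) ^ 3) + 13 / (120 * (x + 1) ^ 4))
      + (1 / (12 * x ^ 3) + 13 / (120 * x ^ 4)))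
      - (1/x - 1/(2*x^2) + 1/(3*x^3) - 1/(4*x^4) + 1/(5*x^5) - 1/(6*x^6)
        + 1/(x^6*(x-1))) := by
    rw [hrat]
    exact div_pos hN hD
  unfold g
  linarith
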